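/- Every Markov-semidecidable set with empty interior in the computable Cantor space is nowhere dense there. Precisely: if A is a Markov-semidecidable set of computable binary sequences, P ⊆ {0,1}^ℕ is an effective Π⁰₁ set with P ∩ {computables} ⊆ A, and A has empty interior in the computable sequences, then P ∩ {computables} is nowhere dense in A. -/

import Mathlib

/-- The standard enumeration of partial computable functions. -/
noncomputable def phi (e : ℕ) : ℕ →. ℕ := (Denumerable.ofNat Nat.Partrec.Code e).eval

/-- `e` is a program (Markov-name) for the binary sequence `x`. -/
def computesSeq (e : ℕ) (x : ℕ → Bool) : Prop :=
  ∀ n, phi e n = Part.some (cond (x n) 1 0)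

/-- Kolmogorov complexity of a computable binary sequence: least binary length of a program. -/
noncomputable def Kseq (x : ℕ → Bool) : ℕ := sInf (Nat.size '' {e | computesSeq e x})

/-- The cylinder of binary sequences extending the finite string `u`. -/
def cyl (u : List Bool) : Set (ℕ → Bool) := {x | ∀ i : Fin u.length, x i.1 = u.get i}

/-- A uniformly effective family of open subsets of Cantor space: c.e. unions of cylinders. -/
def EffOpenCantorFamily (U : ℕ → Set (ℕ → Bool)) : Prop :=
  ∃ R : ℕ × List Bool → Prop, REPred R ∧ ∀ k, U k = {x | ∃ u, R (k, u) ∧ x ∈ cyl u}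

/-- `A` is Markov-semidecidable via the (index-invariant) set `I`:
for any program `e` of a computable sequence `x`, `x ∈ A ↔ e ∈ I`. -/
def MarkovVia (I : Set ℕ) (A : Set (ℕ → Bool)) : Prop :=
  ∀ e x, Computable x → computesSeq e x → (x ∈ A ↔ e ∈ I)

/-- An effective `Π⁰₁` subset of Cantor space: the complement of a c.e. union of cylinders. -/
def EffClosedCantor (P : Set (ℕ → Bool)) : Prop :=
  ∃ R : List Bool → Prop, REPred R ∧ P = {x | ∀ u, R u → x ∉ cyl u}

/-! ### Auxiliary material -/

section Aux

open Nat.Partrec (Code)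
open Nat.Partrec.Code

/-- prefix of length `m` of a sequence -/
def xpref (x : ℕ → Bool) (m : ℕ) : List Bool := (List.range m).map x

@[simp] lemma xpref_length (x : ℕ → Bool) (m : ℕ) : (xpref x m).length = m := by
  simp [xpref]

lemma xpref_getD (x : ℕ → Bool) {m i : ℕ} (h : i < m) : (xpref x m).getD i false = x i := by
  rw [List.getD_eq_getElem] <;> simp [xpref, h]

lemma mem_cyl_iff {u : List Bool} {y : ℕ → Bool} :
    y ∈ cyl u ↔ ∀ i, (hi : i < u.length) → y i = u[i] := by
  constructor
  · intro h i hi; exact h ⟨i, hi⟩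
  · intro h i; exact h i.1 i.2

lemma self_mem_cyl_xpref (x : ℕ → Bool) (m : ℕ) : x ∈ cyl (xpref x m) := by
  rw [mem_cyl_iff]; intro i hi
  simp only [xpref_length] at hi
  simp [xpref, hi]

lemma prefix_xpref {u : List Bool} {x : ℕ → Bool} (hx : x ∈ cyl u) {m : ℕ}
    (hm : u.length ≤ m) : u <+: xpref x m := by
  rw [List.prefix_iff_eq_take]
  apply List.ext_getElem (by simp [hm.trans, Nat.min_eq_left hm])
  intro i h1 h2
  have hi : i < u.length := h1
  have := hx ⟨i, hi⟩
  simp only [List.getElem_take, xpref, List.getElem_map, List.getElem_range]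
  simp only [List.get_eq_getElem] at this
  exact this.symm

lemma cyl_mono {u v : List Bool} (h : u <+: v) : cyl v ⊆ cyl u := by
  intro y hy
  rw [mem_cyl_iff] at hy ⊢
  intro i hi
  have hiv : i < v.length := hi.trans_le h.length_le
  rw [hy i hiv, h.getElem hi]

lemma getD_of_prefix {u t : List Bool} (h : u <+: t) {i : ℕ} (hi : i < u.length) :
    t.getD i false = u.getD i false := by
  have hit : i < t.length := hi.trans_le h.length_le
  rw [List.getD_eq_getElem _ _ hit, List.getD_eq_getElem _ _ hi, h.getElem hi]

/-- tuples `(s, t, w, j)` coding a stage, a candidate string, a covering string, a time bound. -/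
abbrev Tup : Type := ℕ × List Bool × List Bool × ℕ

/-- step-bounded membership test for the domain of a code -/
def isIn (c : Code) (e s : ℕ) : Bool := (evaln s c e).isSome

/-- bounded existential of `isIn` -/
def BndB (c : Code) (e n : ℕ) : Bool :=
  Nat.rec (motive := fun _ => Bool) (isIn c e 0) (fun m ih => ih || isIn c e (m + 1)) n

/-- boolean prefix test -/
def prefB (a b : List Bool) : Bool :=
  decide (a.length ≤ b.length) &&
    (List.range a.length).foldr (fun i acc => (a.getD i false == b.getD i false) && acc) true

/-- the search predicate of the recursion-theorem construction -/
def QB (x : ℕ → Bool) (u : List Bool) (cI cR : Code) (e k : ℕ) : Bool :=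
  (Encodable.decode (α := Tup) k).elim false fun p =>
    isIn cI e p.1 && prefB (xpref x (max p.1 u.length)) p.2.1 && prefB p.2.2.1 p.2.1 &&
      isIn cR (Encodable.encode p.2.2.1) p.2.2.2

/-- output of the construction after a successful search -/
def outN (k n : ℕ) : ℕ :=
  ((Encodable.decode (α := Tup) k).elim [] fun p : Tup =>
    p.2.1.map fun b => cond b 1 0).getD n 0

/-- the self-referential program -/
def bigF (x : ℕ → Bool) (u : List Bool) (cI cR : Code) (c : Code) (n : ℕ) : Part ℕ :=
  bif BndB cI (Encodable.encode c) n then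
    (Nat.rfind fun k => Part.some (QB x u cI cR (Encodable.encode c) k)).map fun k => outN k n
  else Part.some (cond (x n) 1 0)

lemma foldr_and_eq_true (l : List ℕ) (p : ℕ → Bool) :
    (l.foldr (fun i acc => p i && acc) true = true) ↔ ∀ i ∈ l, p i = true := by
  induction l with
  | nil => simp
  | cons a l ih => simp [ih]

lemma prefB_eq_true {a b : List Bool} : prefB a b = true ↔ a <+: b := by
  rw [prefB, Bool.and_eq_true, foldr_and_eq_true, decide_eq_true_iff]
  constructor
  · rintro ⟨hle, hall⟩
    rw [List.prefix_iff_eq_take]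
    apply List.ext_getElem (by simp [Nat.min_eq_left hle])
    intro i h1 h2
    have hi : i < a.length := h1
    have := hall i (by simp [hi])
    rw [beq_iff_eq, List.getD_eq_getElem _ _ hi,
      List.getD_eq_getElem _ _ (hi.trans_le hle)] at this
    simpa [List.getElem_take] using this
  · intro h
    refine ⟨h.length_le, fun i hi => ?_⟩
    rw [List.mem_range] at hi
    rw [beq_iff_eq, getD_of_prefix h hi]

lemma BndB_succ (c : Code) (e n : ℕ) :
    BndB c e (n + 1) = (BndB c e n || isIn c e (n + 1)) := rfl

lemma BndB_eq_true {c : Code} {e n : ℕ} :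
    BndB c e n = true ↔ ∃ s ≤ n, isIn c e s = true := by
  induction n with
  | zero =>
    simp only [BndB, Nat.le_zero]
    constructor
    · exact fun h => ⟨0, rfl, h⟩
    · rintro ⟨s, rfl, h⟩; exact h
  | succ n ih =>
    rw [BndB_succ, Bool.or_eq_true, ih]
    constructor
    · rintro (⟨s, hs, h⟩ | h)
      · exact ⟨s, hs.trans (Nat.le_succ n), h⟩
      · exact ⟨n + 1, le_refl _, h⟩
    · rintro ⟨s, hs, h⟩
      rcases Nat.lt_or_ge s (n + 1) with h' | h'
      · exact Or.inl ⟨s, Nat.lt_succ_iff.1 h', h⟩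
      · exact Or.inr (by rwa [Nat.le_antisymm hs h'] at h)

lemma map_bit_getD (t : List Bool) (n : ℕ) :
    ((t.map fun b => cond b 1 0).getD n 0) = cond (t.getD n false) 1 0 := by
  by_cases h : n < t.length
  · rw [List.getD_eq_getElem _ _ (by simpa using h), List.getD_eq_getElem _ _ h]
    simp
  · rw [List.getD_eq_default _ _ (by simpa using Nat.le_of_not_lt h),
      List.getD_eq_default _ _ (Nat.le_of_not_lt h)]
    rfl
section Comp
open Nat.Partrec (Code)
open Nat.Partrec.Code
lemma prefB_prim : Primrec₂ prefB := by
  have hlen : Primrec fun p : List Bool × List Bool => decide (p.1.length ≤ p.2.length) :=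
    (Primrec.nat_le.comp (Primrec.list_length.comp Primrec.fst)
      (Primrec.list_length.comp Primrec.snd)).decide
  have hh : Primrec₂ fun (p : List Bool × List Bool) (q : ℕ × Bool) =>
      (p.1.getD q.1 false == p.2.getD q.1 false) && q.2 := by
    have h1 : Primrec fun r : (List Bool × List Bool) × ℕ × Bool => r.1.1.getD r.2.1 false :=
      (Primrec.list_getD false).comp (Primrec.fst.comp Primrec.fst)
        (Primrec.fst.comp Primrec.snd)
    have h2 : Primrec fun r : (List Bool × List Bool) × ℕ × Bool => r.1.2.getD r.2.1 false :=
      (Primrec.list_getD false).comp (Primrec.snd.comp Primrec.fst)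
        (Primrec.fst.comp Primrec.snd)
    exact (Primrec.and.comp (Primrec.beq.comp h1 h2) (Primrec.snd.comp Primrec.snd)).to₂
  have hfold : Primrec fun p : List Bool × List Bool =>
      (List.range p.1.length).foldr
        (fun i acc => (p.1.getD i false == p.2.getD i false) && acc) true :=
    Primrec.list_foldr (Primrec.list_range.comp (Primrec.list_length.comp Primrec.fst))
      (Primrec.const true) hh
  exact (Primrec.and.comp hlen hfold).to₂
end Comp
section Comp2
open Nat.Partrec (Code)
open Nat.Partrec.Code
lemma isIn_comp (c : Code) : Computable₂ (isIn c) :=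
  ((Primrec.option_isSome.comp
    (primrec_evaln.comp ((Primrec.snd.pair (Primrec.const c)).pair Primrec.fst))).to₂).to_comp

lemma xpref_comp {x : ℕ → Bool} (hx : Computable x) : Computable (xpref x) := by
  have h : Computable₂ fun (_ : ℕ) (p : ℕ × List Bool) => p.2 ++ [x p.1] :=
    (Computable.list_concat.comp (Computable.snd.comp Computable.snd)
      (hx.comp (Computable.fst.comp Computable.snd))).to₂
  have := Computable.nat_rec Computable.id (Computable.const ([] : List Bool)) h
  refine this.of_eq fun n => ?_
  simp only [id_eq]
  induction n with
  | zero => simp [xpref]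
  | succ n ih =>
    show (Nat.rec [] (fun y IH => IH ++ [x y]) n : List Bool) ++ [x n] = xpref x (n + 1)
    rw [ih]; simp [xpref, List.range_succ]
end Comp2
section C3
open Nat.Partrec (Code)
open Nat.Partrec.Code
lemma BndB_comp (c : Code) : Computable₂ (BndB c) := by
  have h : Computable₂ fun (p : ℕ × ℕ) (q : ℕ × Bool) => q.2 || isIn c p.1 (q.1 + 1) :=
    ((Primrec.or.to_comp).comp (Computable.snd.comp Computable.snd)
      ((isIn_comp c).comp (Computable.fst.comp Computable.fst)
        (Computable.succ.comp (Computable.fst.comp Computable.snd)))).to₂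
  have h0 := Computable.nat_rec Computable.snd
    ((isIn_comp c).comp Computable.fst (Computable.const 0)) h
  have h2 : Computable fun p : ℕ × ℕ => BndB c p.1 p.2 := h0.of_eq fun p => rfl
  exact h2.to₂
end C3
section C5
open Nat.Partrec (Code)
open Nat.Partrec.Code

lemma QB_comp {x : ℕ → Bool} (hx : Computable x) (u : List Bool) (cI cR : Code) :
    Computable₂ (QB x u cI cR) := by
  have hg : Computable₂ fun (p : ℕ × ℕ) (q : Tup) =>
      isIn cI p.1 q.1 && prefB (xpref x (max q.1 u.length)) q.2.1 && prefB q.2.2.1 q.2.1 &&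
        isIn cR (Encodable.encode q.2.2.1) q.2.2.2 := by
    have hs : Computable fun r : (ℕ × ℕ) × Tup => r.2.1 := Computable.fst.comp Computable.snd
    have ht : Computable fun r : (ℕ × ℕ) × Tup => r.2.2.1 :=
      Computable.fst.comp (Computable.snd.comp Computable.snd)
    have hw : Computable fun r : (ℕ × ℕ) × Tup => r.2.2.2.1 :=
      Computable.fst.comp (Computable.snd.comp (Computable.snd.comp Computable.snd))
    have hj : Computable fun r : (ℕ × ℕ) × Tup => r.2.2.2.2 :=
      Computable.snd.comp (Computable.snd.comp (Computable.snd.comp Computable.snd))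
    have c1 : Computable fun r : (ℕ × ℕ) × Tup => isIn cI r.1.1 r.2.1 :=
      (isIn_comp cI).comp (Computable.fst.comp Computable.fst) hs
    have c2 : Computable fun r : (ℕ × ℕ) × Tup =>
        prefB (xpref x (max r.2.1 u.length)) r.2.2.1 :=
      prefB_prim.to_comp.comp
        ((xpref_comp hx).comp ((Primrec.nat_max.to_comp).comp hs (Computable.const u.length)))
        ht
    have c3 : Computable fun r : (ℕ × ℕ) × Tup => prefB r.2.2.2.1 r.2.2.1 :=
      prefB_prim.to_comp.comp hw ht
    have c4 : Computable fun r : (ℕ × ℕ) × Tup =>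
        isIn cR (Encodable.encode r.2.2.2.1) r.2.2.2.2 :=
      (isIn_comp cR).comp (Computable.encode.comp hw) hj
    exact ((Primrec.and.to_comp).comp
      ((Primrec.and.to_comp).comp ((Primrec.and.to_comp).comp c1 c2) c3) c4).to₂
  have hoc := Computable.option_casesOn
    (Computable.decode.comp Computable.snd : Computable fun p : ℕ × ℕ =>
      (Encodable.decode p.2 : Option Tup))
    (Computable.const false) hg
  have h2 : Computable fun p : ℕ × ℕ => QB x u cI cR p.1 p.2 := hoc.of_eq fun p => by
    simp only [QB]
    rcases (Encodable.decode p.2 : Option Tup) with _ | q <;> rfl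
  exact h2.to₂

lemma outN_comp : Computable₂ outN := by
  have hg : Computable₂ fun (_ : ℕ × ℕ) (q : Tup) => q.2.1.map fun b => cond b 1 0 := by
    have hbit : Primrec₂ fun (_ : (ℕ × ℕ) × Tup) (b : Bool) => (cond b 1 0 : ℕ) :=
      ((Primrec.dom_bool fun b => (cond b 1 0 : ℕ)).comp Primrec.snd).to₂
    exact (Primrec.list_map
      (Primrec.fst.comp (Primrec.snd.comp Primrec.snd) :
        Primrec fun r : (ℕ × ℕ) × Tup => r.2.2.1) hbit).to_comp.to₂
  have hoc := Computable.option_casesOn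
    (Computable.decode.comp Computable.fst : Computable fun p : ℕ × ℕ =>
      (Encodable.decode p.1 : Option Tup))
    (Computable.const ([] : List ℕ)) hg
  have hlist : Computable fun p : ℕ × ℕ =>
      (Encodable.decode (α := Tup) p.1).elim [] fun q : Tup =>
        q.2.1.map fun b => cond b 1 0 := hoc.of_eq fun p => by
    rcases (Encodable.decode p.1 : Option Tup) with _ | q <;> rfl
  have h2 : Computable fun p : ℕ × ℕ => outN p.1 p.2 :=
    ((Primrec.list_getD (0 : ℕ)).to_comp).comp hlist Computable.snd
  exact h2.to₂
end C5
section C6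
open Nat.Partrec (Code)
open Nat.Partrec.Code

lemma bigF_partrec {x : ℕ → Bool} (hx : Computable x) (u : List Bool) (cI cR : Code) :
    Partrec₂ (bigF x u cI cR) := by
  have hc : Computable fun p : Code × ℕ => BndB cI (Encodable.encode p.1) p.2 :=
    (BndB_comp cI).comp (Computable.encode.comp Computable.fst) Computable.snd
  have hq : Computable₂ fun (p : Code × ℕ) (k : ℕ) =>
      QB x u cI cR (Encodable.encode p.1) k :=
    ((QB_comp hx u cI cR).comp
      (Computable.encode.comp (Computable.fst.comp Computable.fst))
      Computable.snd).to₂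
  have hp : Partrec₂ fun (p : Code × ℕ) (k : ℕ) =>
      (Part.some (QB x u cI cR (Encodable.encode p.1) k) : Part Bool) := hq.partrec₂
  have hout : Computable₂ fun (p : Code × ℕ) (k : ℕ) => outN k p.2 :=
    (outN_comp.comp Computable.snd (Computable.snd.comp Computable.fst)).to₂
  have hf : Partrec fun p : Code × ℕ =>
      (Nat.rfind fun k => Part.some (QB x u cI cR (Encodable.encode p.1) k)).map
        fun k => outN k p.2 :=
    (Partrec.rfind hp).map hout
  have hg : Partrec fun p : Code × ℕ => (Part.some (cond (x p.2) 1 0) : Part ℕ) :=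
    Computable.cond (hx.comp Computable.snd) (Computable.const 1) (Computable.const 0)
  have h2 : Partrec fun p : Code × ℕ => bigF x u cI cR p.1 p.2 :=
    (Partrec.cond hc hf hg).of_eq fun p => rfl
  exact h2.to₂
end C6
section Main
open Nat.Partrec (Code)
open Nat.Partrec.Code

lemma dom_iff_isIn (c : Code) (n : ℕ) : (eval c n).Dom ↔ ∃ s, isIn c n s = true := by
  rw [Part.dom_iff_mem]
  constructor
  · rintro ⟨a, ha⟩
    rw [evaln_complete] at ha
    obtain ⟨s, hs⟩ := ha
    exact ⟨s, by rw [isIn, Option.isSome_iff_exists]; exact ⟨a, hs⟩⟩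
  · rintro ⟨s, hs⟩
    rw [isIn, Option.isSome_iff_exists] at hs
    obtain ⟨a, ha⟩ := hs
    exact ⟨a, evaln_sound ha⟩

lemma kls_false (A : Set (ℕ → Bool)) (I : Set ℕ) (hIre : REPred (· ∈ I)) (hMI : MarkovVia I A)
    (R : List Bool → Prop) (hRre : REPred R)
    {x : ℕ → Bool} (hx : Computable x) (hxA : x ∈ A) {u : List Bool} (hxu : x ∈ cyl u)
    (step1 : ∀ m : ℕ, ∃ t w : List Bool, xpref x m <+: t ∧ w <+: t ∧ R w)
    (hbad : ∀ y, y ∈ A → y ∈ cyl u → ∀ w, R w → y ∉ cyl w) : False := by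
  -- a code for (semi-deciding) I
  have hI2 : Partrec fun e : ℕ =>
      (Part.assert (e ∈ I) fun _ => Part.some ()).map fun _ => (0 : ℕ) :=
    hIre.map ((Computable.const 0 : Computable fun _ : ℕ × Unit => (0 : ℕ)).to₂)
  obtain ⟨cI, hcI⟩ := exists_code.1 (Partrec.nat_iff.1 hI2)
  have hIiff : ∀ e, e ∈ I ↔ ∃ s, isIn cI e s = true := by
    intro e
    rw [← dom_iff_isIn, hcI]
    exact ⟨fun h => ⟨h, trivial⟩, fun ⟨h, _⟩ => h⟩
  -- a code for (semi-deciding) R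
  have hR2 : Partrec fun n : ℕ =>
      (Part.ofOption (Encodable.decode (α := List Bool) n)).bind fun w =>
        (Part.assert (R w) fun _ => Part.some ()).map fun _ => (0 : ℕ) := by
    refine Partrec.bind (Computable.decode.ofOption.of_eq fun n => rfl) ?_
    exact ((hRre.comp Computable.snd).map
      ((Computable.const 0 : Computable fun _ : (ℕ × List Bool) × Unit => (0 : ℕ)).to₂)).to₂
  obtain ⟨cR, hcR⟩ := exists_code.1 (Partrec.nat_iff.1 hR2)
  have hRiff : ∀ w : List Bool, R w ↔ ∃ j, isIn cR (Encodable.encode w) j = true := by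
    intro w
    rw [← dom_iff_isIn, hcR]
    simp only [Encodable.encodek]
    constructor
    · intro h
      exact ⟨trivial, ⟨h, trivial⟩⟩
    · rintro ⟨_, h, _⟩
      exact h
  -- the self-referential program
  obtain ⟨c, hc⟩ := fixed_point₂ (bigF_partrec hx u cI cR)
  have hphi : ∀ n, phi (Encodable.encode c) n = bigF x u cI cR c n := by
    intro n
    rw [phi, Denumerable.ofNat_encode, hc]
  by_cases hEx : ∃ s, isIn cI (Encodable.encode c) s = true
  · obtain ⟨s₁, hs₁⟩ := hEx
    obtain ⟨t₁, w₁, hpt₁, hwt₁, hRw₁⟩ := step1 (max s₁ u.length)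
    obtain ⟨j₁, hj₁⟩ := (hRiff w₁).1 hRw₁
    have hwit : QB x u cI cR (Encodable.encode c)
        (Encodable.encode ((s₁, t₁, w₁, j₁) : Tup)) = true := by
      simp [QB, Encodable.encodek, hs₁, hj₁, prefB_eq_true, hpt₁, hwt₁]
    have hdom : (Nat.rfind fun k =>
        Part.some (QB x u cI cR (Encodable.encode c) k)).Dom := by
      exact Nat.rfind_dom.2 ⟨_, Part.mem_some_iff.2 hwit.symm, fun {m} _ => trivial⟩
    set k₀ := (Nat.rfind fun k =>
        Part.some (QB x u cI cR (Encodable.encode c) k)).get hdom with hk₀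
    have hk₀mem : k₀ ∈ Nat.rfind fun k =>
        Part.some (QB x u cI cR (Encodable.encode c) k) := Part.get_mem hdom
    have hQ : QB x u cI cR (Encodable.encode c) k₀ = true :=
      (Part.mem_some_iff.1 (Nat.rfind_spec hk₀mem)).symm
    have hrfind_eq : (Nat.rfind fun k =>
        Part.some (QB x u cI cR (Encodable.encode c) k)) = Part.some k₀ :=
      Part.eq_some_iff.2 hk₀mem
    rcases hdec : (Encodable.decode (α := Tup) k₀) with _ | q
    · rw [QB, hdec] at hQ
      simp at hQ
    obtain ⟨s, t, w, j⟩ := q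
    rw [QB, hdec] at hQ
    simp only [Option.elim_some, Bool.and_eq_true, prefB_eq_true] at hQ
    obtain ⟨⟨⟨hs, hpt⟩, hwt⟩, hj⟩ := hQ
    have hRw : R w := (hRiff w).2 ⟨j, hj⟩
    have heI : Encodable.encode c ∈ I := (hIiff _).2 ⟨s, hs⟩
    set y : ℕ → Bool := fun n => t.getD n false with hy
    have hyx : ∀ n, n < max s u.length → y n = x n := by
      intro n hn
      have h1 : n < (xpref x (max s u.length)).length := by simpa using hn
      rw [hy]
      dsimp only
      rw [getD_of_prefix hpt h1, xpref_getD x hn]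
    have hcompy : Computable y :=
      ((Primrec.list_getD false).comp (Primrec.const t) Primrec.id).to_comp
    have hseq : computesSeq (Encodable.encode c) y := by
      intro n
      rw [hphi n, bigF]
      cases hB : BndB cI (Encodable.encode c) n
      · simp only [cond_false]
        have hn : n < s := by
          by_contra h
          have : BndB cI (Encodable.encode c) n = true :=
            BndB_eq_true.2 ⟨s, Nat.le_of_not_lt h, hs⟩
          rw [hB] at this
          exact Bool.false_ne_true this
        rw [hyx n (lt_of_lt_of_le hn (le_max_left _ _))]
      · simp only [cond_true]
        rw [hrfind_eq, Part.map_some]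
        rw [outN, hdec]
        simp only [Option.elim_some]
        rw [map_bit_getD]
    have hyA : y ∈ A := (hMI _ y hcompy hseq).2 heI
    have hyu : y ∈ cyl u := by
      rw [mem_cyl_iff]
      intro i hi
      rw [hyx i (lt_of_lt_of_le hi (le_max_right _ _))]
      exact mem_cyl_iff.1 hxu i hi
    have hyw : y ∈ cyl w := by
      rw [mem_cyl_iff]
      intro i hi
      rw [hy]
      dsimp only
      rw [getD_of_prefix hwt hi, List.getD_eq_getElem _ _ hi]
    exact hbad y hyA hyu w hRw hyw
  · push_neg at hEx
    have heI : Encodable.encode c ∉ I := by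
      intro h
      obtain ⟨s, hs⟩ := (hIiff _).1 h
      exact hEx s hs
    have hseq : computesSeq (Encodable.encode c) x := by
      intro n
      rw [hphi n, bigF]
      have hB : BndB cI (Encodable.encode c) n = false := by
        rw [← Bool.not_eq_true, BndB_eq_true]
        rintro ⟨s, _, hs⟩
        exact hEx s hs
      rw [hB]
      rfl
    exact heI ((hMI _ x hx hseq).1 hxA)
end Main
/-- If `A` is Markov-semidecidable with empty interior in the computable Cantor space, and
`P` is an effective `Π⁰₁` set with `P ∩ {computables} ⊆ A`, then `P ∩ {computables}` is
nowhere dense in `A`. -/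
theorem stmt8 (A : Set (ℕ → Bool)) (hsub : A ⊆ {x | Computable x})
    (hM : ∃ I : Set ℕ, REPred (· ∈ I) ∧ MarkovVia I A)
    (P : Set (ℕ → Bool)) (hP : EffClosedCantor P)
    (hPA : P ∩ {x | Computable x} ⊆ A)
    (hint : ∀ u : List Bool, ¬ (cyl u ∩ {x | Computable x} ⊆ A)) :
    ∀ u : List Bool, (A ∩ cyl u).Nonempty →
      ∃ v : List Bool, u <+: v ∧ (A ∩ cyl v).Nonempty ∧ A ∩ cyl v ∩ P = ∅ := by
  obtain ⟨I, hIre, hMI⟩ := hM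
  obtain ⟨R, hRre, hPeq⟩ := hP
  intro u hu
  obtain ⟨x, hxA, hxu⟩ := hu
  have hx : Computable x := hsub hxA
  by_cases hall : ∀ y, y ∈ A → y ∈ cyl u → y ∈ P
  · exfalso
    refine kls_false A I hIre hMI R hRre hx hxA hxu ?_ ?_
    · intro m
      obtain ⟨z, hz, hzA⟩ := Set.not_subset.1 (hint (xpref x m))
      obtain ⟨hzv, hzc⟩ := hz
      have hzP : z ∉ P := fun hP' => hzA (hPA ⟨hP', hzc⟩)
      rw [hPeq] at hzP
      simp only [Set.mem_setOf_eq] at hzP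
      push_neg at hzP
      obtain ⟨w, hRw, hzw⟩ := hzP
      refine ⟨xpref z (max m w.length), w, ?_, ?_, hRw⟩
      · exact prefix_xpref hzv (by simp)
      · exact prefix_xpref hzw (le_max_right _ _)
    · intro y hyA hyu w hRw hyw
      have hmem := hall y hyA hyu
      rw [hPeq] at hmem
      exact hmem w hRw hyw
  · push_neg at hall
    obtain ⟨x', hx'A, hx'u, hx'P⟩ := hall
    rw [hPeq] at hx'P
    simp only [Set.mem_setOf_eq] at hx'P
    push_neg at hx'P
    obtain ⟨w, hRw, hx'w⟩ := hx'P
    refine ⟨xpref x' (max u.length w.length), ?_, ⟨x', hx'A, self_mem_cyl_xpref x' _⟩, ?_⟩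
    · exact prefix_xpref hx'u (le_max_left _ _)
    · apply Set.eq_empty_iff_forall_notMem.2
      rintro y ⟨⟨hyA, hyv⟩, hyP⟩
      have hyw : y ∈ cyl w := cyl_mono (prefix_xpref hx'w (le_max_right _ _)) hyv
      rw [hPeq] at hyP
      exact hyP w hRw hyw
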